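/- Let F, G ∈ NN_ReLU^{n₀}(n₀) be ReLU network functions from ℝ^{n₀} to ℝ^{n₀} with all layer widths at most n₀, let M ⊂ ℝ^{n₀} be a compact set, and set K := F^{-1}((F(M))°) ∩ G^{-1}((G(M))°). If F and G coincide on vectors v_1, …, v_{n₀+1} ∈ K such that v_1 − v_{n₀+1}, …, v_{n₀} − v_{n₀+1} are linearly independent, then F(x) = G(x) for all x ∈ K. -/

import Mathlib

noncomputable section

/-- The rectified linear unit. -/
def ReLU (t : ℝ) : ℝ := max t 0

/-- `IsNetChain σ m F` : `F` is a network function of the form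
`W_L ∘ A_{L-1} ∘ ⋯ ∘ A_1 + b_L` where `A_j x = σ (W_j x + b_j)` (with `σ` applied
componentwise), and all layer widths `n_1,…,n_L` are at most `m`. -/
inductive IsNetChain (σ : ℝ → ℝ) (m : ℕ) : {a b : ℕ} → ((Fin a → ℝ) → (Fin b → ℝ)) → Prop
  | last {a b : ℕ} (W : Matrix (Fin b) (Fin a) ℝ) (v : Fin b → ℝ) (hb : b ≤ m) :
      IsNetChain σ m (fun x => W.mulVec x + v)
  | hidden {a b c : ℕ} (W : Matrix (Fin b) (Fin a) ℝ) (v : Fin b → ℝ)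
      {g : (Fin b → ℝ) → (Fin c → ℝ)} (hb : b ≤ m) (hg : IsNetChain σ m g) :
      IsNetChain σ m (fun x => g (fun i => σ (W.mulVec x i + v i)))

open MeasureTheory Module Function Set

lemma relu_pi_lipschitz (b : ℕ) : LipschitzWith 1 (fun (y : Fin b → ℝ) i => ReLU (y i)) := by
  rw [lipschitzWith_iff_dist_le_mul]
  intro x y
  rw [NNReal.coe_one, one_mul]
  refine dist_pi_le_iff dist_nonneg |>.2 fun i => ?_
  calc dist (ReLU (x i)) (ReLU (y i)) ≤ dist (x i) (y i) := by
        simp only [ReLU, Real.dist_eq]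
        exact abs_max_sub_max_le_abs _ _ _
    _ ≤ dist x y := dist_le_pi_dist x y i

lemma affine_lipschitz {a c : ℕ} (f : (Fin a → ℝ) →ₗ[ℝ] (Fin c → ℝ)) (v : Fin c → ℝ) :
    ∃ K, LipschitzWith K (fun x => f x + v) := by
  let g := LinearMap.toContinuousLinearMap f
  refine ⟨‖g‖₊, ?_⟩
  rw [lipschitzWith_iff_dist_le_mul]
  intro x y
  rw [dist_add_right]
  exact (lipschitzWith_iff_dist_le_mul.1 g.lipschitz) x y

lemma chain_lipschitz {m a c : ℕ} {H : (Fin a → ℝ) → (Fin c → ℝ)}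
    (h : IsNetChain ReLU m H) : ∃ K, LipschitzWith K H := by
  induction h with
  | last W v hb => exact affine_lipschitz W.mulVecLin v
  | hidden W v hb hg ih =>
    obtain ⟨Kg, hKg⟩ := ih
    obtain ⟨Ka, hKa⟩ := affine_lipschitz (Matrix.mulVecLin W) v
    exact ⟨Kg * (1 * Ka), hKg.comp ((relu_pi_lipschitz _).comp hKa)⟩

lemma lipschitz_image_submodule_null {c : ℕ} {K : NNReal} {φ : (Fin c → ℝ) → (Fin c → ℝ)}
    (hφ : LipschitzWith K φ) (V : Submodule ℝ (Fin c → ℝ)) (hV : V ≠ ⊤) :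
    volume (φ '' (V : Set _)) = 0 := by
  have key : (μH[(c:ℝ)] : Measure (Fin c → ℝ)) = volume := by
    simpa using (hausdorffMeasure_pi_real (ι := Fin c))
  have h0 : (volume : Measure (Fin c → ℝ)) (V : Set _) = 0 :=
    Measure.addHaar_submodule _ V hV
  have hb := hφ.hausdorffMeasure_image_le (d := (c:ℝ)) (Nat.cast_nonneg c) (V : Set _)
  rw [key, h0, mul_zero] at hb
  exact le_antisymm hb zero_le

/-- Main structural lemma: a narrow ReLU chain agrees with an (injective) affine map on the
preimage of the interior of the image of any set. -/
lemma chain_affine_on_interior {m a c : ℕ} {H : (Fin a → ℝ) → (Fin c → ℝ)}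
    (h : IsNetChain ReLU m H) :
    ∀ (_ : a ≤ c) (_ : m ≤ c) (C : Set (Fin a → ℝ)),
      ∃ (W : Matrix (Fin c) (Fin a) ℝ) (u : Fin c → ℝ),
        ((interior (H '' C)).Nonempty → Function.Injective W.mulVecLin) ∧
        ∀ x, H x ∈ interior (H '' C) → H x = W.mulVec x + u := by
  induction h with
  | last W v hb =>
    intro hac hmc C
    by_cases hne : (interior ((fun x => W.mulVec x + v) '' C)).Nonempty
    · refine ⟨W, v, fun _ => ?_, fun x _ => rfl⟩
      -- surjectivity of the linear part
      have hrange : LinearMap.range W.mulVecLin = ⊤ := by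
        apply Submodule.eq_top_of_nonempty_interior'
        obtain ⟨p, hp⟩ := hne
        set U : Set (Fin _ → ℝ) :=
          (· + v) ⁻¹' (interior ((fun x => W.mulVec x + v) '' C)) with hU
        have hUo : IsOpen U := isOpen_interior.preimage (continuous_id.add continuous_const)
        have hUs : U ⊆ (LinearMap.range W.mulVecLin : Set _) := by
          intro z hz
          obtain ⟨x, -, hx⟩ := interior_subset hz
          exact ⟨x, by simpa [Matrix.mulVecLin_apply] using add_right_cancel hx⟩
        refine ⟨p - v, interior_maximal hUs hUo ?_⟩
        simp only [hU, Set.mem_preimage, sub_add_cancel]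
        exact hp
      have h1 := W.mulVecLin.finrank_range_add_finrank_ker
      rw [hrange, finrank_top, Module.finrank_fin_fun, Module.finrank_fin_fun] at h1
      have hker : finrank ℝ (LinearMap.ker W.mulVecLin) = 0 := by omega
      exact LinearMap.ker_eq_bot.mp (Submodule.finrank_eq_zero.mp hker)
    · exact ⟨0, 0, fun hn => absurd hn hne, fun x hx => (hne ⟨_, hx⟩).elim⟩
  | hidden W v hb hg ih =>
    rename_i a b c g
    intro hac hmc C
    set A : (Fin a → ℝ) → (Fin b → ℝ) := fun x i => ReLU (W.mulVec x i + v i) with hA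
    by_cases hne : (interior ((fun x => g (fun i => ReLU (W.mulVec x i + v i))) '' C)).Nonempty
    · have himg : (fun x => g (fun i => ReLU (W.mulVec x i + v i))) '' C = g '' (A '' C) :=
        (Set.image_image g A C).symm
      set f := W.mulVecLin with hf
      -- step 1 : rank of the first layer is c
      have hr : finrank ℝ (LinearMap.range f) = c := by
        by_contra hrc
        have hrle : finrank ℝ (LinearMap.range f) ≤ c :=
          le_trans (Submodule.finrank_le _) (by rw [Module.finrank_fin_fun]; exact hb.trans hmc)
        have hrlt : finrank ℝ (LinearMap.range f) < c := lt_of_le_of_ne hrle hrc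
        set π := LinearMap.funLeft ℝ ℝ (Fin.castLE hac) with hπdef
        have hπ : Function.Surjective π :=
          LinearMap.funLeft_surjective_of_injective ℝ ℝ _ (Fin.castLE_injective hac)
        set ℓ := f.comp π with hℓ
        have hrangeℓ : LinearMap.range ℓ = LinearMap.range f := by
          rw [hℓ, LinearMap.range_comp, LinearMap.range_eq_top.2 hπ, Submodule.map_top]
        have hkerℓ : LinearMap.ker ℓ ≠ ⊥ := by
          intro h0
          have h1 := ℓ.finrank_range_add_finrank_ker
          rw [h0, finrank_bot, add_zero, hrangeℓ, Module.finrank_fin_fun] at h1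
          exact hrc h1
        obtain ⟨V, hV⟩ := Submodule.exists_isCompl (LinearMap.ker ℓ)
        have hVne : V ≠ ⊤ := by
          intro hVt
          apply hkerℓ
          rw [hVt] at hV
          exact disjoint_top.mp hV.disjoint
        have hcov : ∀ x : Fin a → ℝ, ∃ w ∈ V, ℓ w = f x := by
          intro x
          have hx : f x ∈ LinearMap.range ℓ := by rw [hrangeℓ]; exact ⟨x, rfl⟩
          obtain ⟨z, hz⟩ := hx
          have hz2 : z ∈ (LinearMap.ker ℓ) ⊔ V := by rw [hV.sup_eq_top]; trivial
          obtain ⟨k, hk, w, hw, hkw⟩ := Submodule.mem_sup.1 hz2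
          refine ⟨w, hw, ?_⟩
          rw [← hz, ← hkw, map_add, LinearMap.mem_ker.1 hk, zero_add]
        obtain ⟨Kg, hKg⟩ := chain_lipschitz hg
        obtain ⟨Ka, hKa⟩ := affine_lipschitz ℓ v
        set Φ : (Fin c → ℝ) → (Fin c → ℝ) := fun z => g (fun i => ReLU (ℓ z i + v i)) with hΦ
        have hΦlip : LipschitzWith (Kg * (1 * Ka)) Φ :=
          hKg.comp ((relu_pi_lipschitz _).comp hKa)
        have hnull : volume (Φ '' (V : Set _)) = 0 :=
          lipschitz_image_submodule_null hΦlip V hVne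
        have hsub : ((fun x => g (fun i => ReLU (W.mulVec x i + v i))) '' C) ⊆ Φ '' (V : Set _) := by
          rintro _ ⟨x, -, rfl⟩
          obtain ⟨w, hw, hℓw⟩ := hcov x
          refine ⟨w, hw, ?_⟩
          have : (fun i => ReLU (ℓ w i + v i)) = fun i => ReLU (W.mulVec x i + v i) := by
            funext i
            rw [hℓw]
            rfl
          simp only [hΦ, this]
        have hnull2 : volume ((fun x => g (fun i => ReLU (W.mulVec x i + v i))) '' C) = 0 :=
          measure_mono_null hsub hnull
        exact absurd hnull2 (Measure.measure_pos_of_nonempty_interior volume hne).ne'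
      -- step 2 : injectivity of the first layer
      have hfinj : Function.Injective f := by
        have h1 := f.finrank_range_add_finrank_ker
        rw [hr, Module.finrank_fin_fun] at h1
        have hker : finrank ℝ (LinearMap.ker f) = 0 := by omega
        exact LinearMap.ker_eq_bot.mp (Submodule.finrank_eq_zero.mp hker)
      -- step 3 : induction hypothesis on the tail
      obtain ⟨W', u, hinj', hagr'⟩ := ih (hb.trans hmc) hmc (A '' C)
      have hneg : (interior (g '' (A '' C))).Nonempty := by rwa [← himg]
      have hTinj : Function.Injective W'.mulVecLin := hinj' hneg
      refine ⟨W' * W, W'.mulVec v + u, fun _ => ?_, ?_⟩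
      · -- injectivity of the composite
        intro x y hxy
        simp only [Matrix.mulVecLin_apply, ← Matrix.mulVec_mulVec] at hxy
        exact hfinj (hTinj hxy)
      · intro x hx
        have hgx : g (A x) ∈ interior (g '' (A '' C)) := by rw [← himg]; exact hx
        have key : ∀ i, 0 ≤ W.mulVec x i + v i := by
          by_contra hkey
          push_neg at hkey
          obtain ⟨i, hi⟩ := hkey
          set y := A x with hy
          have hyi : y i = 0 := max_eq_right hi.le
          have hgy : g y = W'.mulVec y + u := hagr' y hgx
          set T : (Fin b → ℝ) → (Fin c → ℝ) := fun w => W'.mulVec w + u with hT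
          set e : Fin b → ℝ := Pi.single i 1 with he
          have hcont : Continuous fun s : ℝ => T (y - s • e) := by
            have h1 : Continuous fun s : ℝ => y - s • e :=
              continuous_const.sub (continuous_id.smul continuous_const)
            have h2 : Continuous T := by
              simp only [hT]
              exact ((Matrix.mulVecLin W').continuous_of_finiteDimensional).add continuous_const
            exact h2.comp h1
          have h0mem : T (y - (0:ℝ) • e) ∈ interior (g '' (A '' C)) := by
            simp only [zero_smul, sub_zero]
            show W'.mulVec y + u ∈ _
            rw [← hgy]
            exact hgx
          have hnhds : {s : ℝ | T (y - s • e) ∈ interior (g '' (A '' C))} ∈ nhds 0 :=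
            (isOpen_interior.preimage hcont).mem_nhds h0mem
          obtain ⟨ε, hε, hball⟩ := Metric.mem_nhds_iff.1 hnhds
          have hsmem : (ε/2) ∈ {s : ℝ | T (y - s • e) ∈ interior (g '' (A '' C))} := by
            apply hball
            rw [Metric.mem_ball, Real.dist_eq, sub_zero, abs_of_pos (by linarith)]
            linarith
          obtain ⟨cpt, hcptC, hcpt⟩ := interior_subset hsmem
          have hcpti : 0 ≤ cpt i := by
            obtain ⟨x', -, rfl⟩ := hcptC
            exact le_max_right _ _
          have hgcpt : g cpt = T cpt := hagr' cpt (by rw [hcpt]; exact hsmem)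
          have hcpteq : cpt = y - (ε/2) • e := by
            have h3 : T cpt = T (y - (ε/2) • e) := by rw [← hgcpt, hcpt]
            have h4 : W'.mulVec cpt = W'.mulVec (y - (ε/2) • e) :=
              add_right_cancel h3
            exact hTinj h4
          rw [hcpteq] at hcpti
          simp only [he, Pi.sub_apply, Pi.smul_apply, Pi.single_eq_same, smul_eq_mul, mul_one,
            hyi, zero_sub] at hcpti
          linarith
        have hAx : A x = fun i => W.mulVec x i + v i := funext fun i => max_eq_left (key i)
        have hfinal : g (A x) = W'.mulVec (A x) + u := hagr' _ hgx
        calc (fun x => g (fun i => ReLU (W.mulVec x i + v i))) x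
            = g (A x) := rfl
          _ = W'.mulVec (A x) + u := hfinal
          _ = W'.mulVec (W.mulVec x + v) + u := by rw [hAx]; rfl
          _ = (W' * W).mulVec x + (W'.mulVec v + u) := by
              rw [Matrix.mulVec_add, Matrix.mulVec_mulVec, add_assoc]
    · exact ⟨0, 0, fun hn => absurd hn hne, fun x hx => (hne ⟨_, hx⟩).elim⟩

/-- **Uniqueness.** Let `F, G ∈ NN_ReLU^{n₀}(n₀)`, `M` compact and
`K = F⁻¹((F(M))°) ∩ G⁻¹((G(M))°)`. If `F` and `G` coincide on `n₀ + 1` points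
`v 0, …, v n₀` of `K` in general position (i.e. `v j - v n₀`, `j = 0,…,n₀-1`, linearly
independent), then `F = G` on all of `K`. -/
theorem uniqueness_on_preimage_of_interior
    (n₀ : ℕ) (M : Set (Fin n₀ → ℝ)) (hM : IsCompact M)
    (F G : (Fin n₀ → ℝ) → (Fin n₀ → ℝ))
    (hF : IsNetChain ReLU n₀ F) (hG : IsNetChain ReLU n₀ G)
    (K : Set (Fin n₀ → ℝ))
    (hK : K = F ⁻¹' interior (F '' M) ∩ G ⁻¹' interior (G '' M))
    (v : Fin (n₀ + 1) → (Fin n₀ → ℝ)) (hvK : ∀ j, v j ∈ K)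
    (hvFG : ∀ j, F (v j) = G (v j))
    (hvli : LinearIndependent ℝ (fun j : Fin n₀ => v j.castSucc - v (Fin.last n₀))) :
    ∀ x ∈ K, F x = G x := by
  rcases Nat.eq_zero_or_pos n₀ with h0 | hpos
  · subst h0
    intro x _
    funext i
    exact i.elim0
  haveI : Nonempty (Fin n₀) := ⟨⟨0, hpos⟩⟩
  obtain ⟨WF, uF, -, hFagr⟩ := chain_affine_on_interior hF le_rfl le_rfl M
  obtain ⟨WG, uG, -, hGagr⟩ := chain_affine_on_interior hG le_rfl le_rfl M
  have hmemF : ∀ {z}, z ∈ K → F z ∈ interior (F '' M) := fun hz => by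
    rw [hK] at hz; exact hz.1
  have hmemG : ∀ {z}, z ∈ K → G z ∈ interior (G '' M) := fun hz => by
    rw [hK] at hz; exact hz.2
  have hj : ∀ j, WF.mulVec (v j) + uF = WG.mulVec (v j) + uG := fun j => by
    rw [← hFagr _ (hmemF (hvK j)), ← hGagr _ (hmemG (hvK j))]
    exact hvFG j
  have hd : ∀ j, WF.mulVec (v j) - WG.mulVec (v j) = uG - uF := fun j =>
    sub_eq_sub_iff_add_eq_add.2 ((hj j).trans (add_comm _ _))
  set L : (Fin n₀ → ℝ) →ₗ[ℝ] (Fin n₀ → ℝ) := WF.mulVecLin - WG.mulVecLin with hL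
  have hLj : ∀ j : Fin n₀, L (v j.castSucc - v (Fin.last n₀)) = 0 := by
    intro j
    simp only [hL, LinearMap.sub_apply, map_sub, Matrix.mulVecLin_apply]
    rw [hd, hd, sub_self]
  have hcard : Fintype.card (Fin n₀) = finrank ℝ (Fin n₀ → ℝ) := by
    rw [Fintype.card_fin, Module.finrank_fin_fun]
  set B := basisOfLinearIndependentOfCardEqFinrank hvli hcard with hB
  have hL0 : L = 0 := by
    apply B.ext
    intro j
    rw [hB, coe_basisOfLinearIndependentOfCardEqFinrank]
    rw [hLj j]
    rfl
  have hW : ∀ z, WF.mulVec z = WG.mulVec z := fun z => by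
    have := congrFun (congrArg (fun (T : (Fin n₀ → ℝ) →ₗ[ℝ] (Fin n₀ → ℝ)) => (T : (Fin n₀ → ℝ) → (Fin n₀ → ℝ))) hL0) z
    simp only [hL, LinearMap.sub_apply, Matrix.mulVecLin_apply, LinearMap.zero_apply] at this
    exact sub_eq_zero.mp this
  have hu : uF = uG := by
    have h1 := hd (Fin.last n₀)
    rw [hW (v (Fin.last n₀))] at h1
    have h2 : uG - uF = 0 := by rw [← h1, sub_self]
    exact (sub_eq_zero.mp h2).symm
  intro x hx
  rw [hFagr x (hmemF hx), hGagr x (hmemG hx), hW x, hu]
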